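/- arXiv:2602.09799 — 2 statements merged into one kernel-verified Lean document; each statement's English description precedes it below -/
import Mathlib

section
/- Addition of block-encodings: if U₁ is an (α₁, m₁, ε₁)-block-encoding of A₁ and U₂ is an (α₂, m₂, ε₂)-block-encoding of A₂ (i.e., ‖A_i − α_i(⟨0^{m_i}|⊗I)U_i(|0^{m_i}⟩⊗I)‖ ≤ ε_i), then there exists a unitary that is an (α₁+α₂, m₁+m₂+1, ε₁+ε₂)-block-encoding of A₁+A₂; in particular the error of the LCU combination (using appropriate state-preparation unitaries) is bounded by ε₁ + ε₂. -/
open Matrix Kronecker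


/-- The spectral (operator 2-) norm of a complex matrix. -/
noncomputable def specNorm {m n : Type*} [Fintype m] [Fintype n] [DecidableEq n]
    (B : Matrix m n ℂ) : ℝ :=
  ‖LinearMap.toContinuousLinearMap (Matrix.toEuclideanLin B)‖

/-- `U` is an `(α, ·, ε)`-block-encoding of `A` with ancilla register of type `a`
whose all-zero state is `z`: `U` is unitary and
`‖A − α(⟨z|⊗I)U(|z⟩⊗I)‖ ≤ ε`. -/
def IsBlockEncoding {a s : Type*} [Fintype a] [DecidableEq a] [Fintype s] [DecidableEq s]
    (z : a) (α ε : ℝ) (U : Matrix (a × s) (a × s) ℂ) (A : Matrix s s ℂ) : Prop :=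
  U ∈ Matrix.unitaryGroup (a × s) ℂ ∧
  specNorm (A - α • Matrix.of fun i j : s => U (z, i) (z, j)) ≤ ε

lemma specNorm_add_le {m n : Type*} [Fintype m] [Fintype n] [DecidableEq n]
    (A B : Matrix m n ℂ) : specNorm (A + B) ≤ specNorm A + specNorm B := by
  unfold specNorm
  rw [map_add, map_add]
  exact norm_add_le _ _

lemma kron_conjTranspose {m n p q : Type*} (A : Matrix m n ℂ) (B : Matrix p q ℂ) :
    (A ⊗ₖ B)ᴴ = Aᴴ ⊗ₖ Bᴴ := by
  ext ⟨i, j⟩ ⟨k, l⟩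
  simp [Matrix.conjTranspose_apply, Matrix.kroneckerMap_apply]

lemma kron_unitary {m p : Type*} [Fintype m] [DecidableEq m] [Fintype p] [DecidableEq p]
    {A : Matrix m m ℂ} {B : Matrix p p ℂ}
    (hA : A ∈ Matrix.unitaryGroup m ℂ) (hB : B ∈ Matrix.unitaryGroup p ℂ) :
    A ⊗ₖ B ∈ Matrix.unitaryGroup (m × p) ℂ := by
  rw [Matrix.mem_unitaryGroup_iff] at *
  show (A ⊗ₖ B) * (A ⊗ₖ B)ᴴ = 1
  rw [kron_conjTranspose, ← Matrix.mul_kronecker_mul,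
    show A * Aᴴ = 1 from hA, show B * Bᴴ = 1 from hB, Matrix.one_kronecker_one]

lemma reindex_unitary {m l : Type*} [Fintype m] [DecidableEq m] [Fintype l] [DecidableEq l]
    (e : m ≃ l) {A : Matrix m m ℂ} (hA : A ∈ Matrix.unitaryGroup m ℂ) :
    Matrix.reindex e e A ∈ Matrix.unitaryGroup l ℂ := by
  rw [Matrix.mem_unitaryGroup_iff] at *
  show Matrix.reindex e e A * (Matrix.reindex e e A)ᴴ = 1
  rw [Matrix.reindex_apply, Matrix.conjTranspose_submatrix, Matrix.submatrix_mul_equiv,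
    show A * Aᴴ = 1 from hA, Matrix.submatrix_one_equiv]

lemma blockDiagonal_unitary {m o : Type*} [Fintype m] [DecidableEq m] [Fintype o] [DecidableEq o]
    {d : o → Matrix m m ℂ} (h : ∀ k, d k ∈ Matrix.unitaryGroup m ℂ) :
    Matrix.blockDiagonal d ∈ Matrix.unitaryGroup (m × o) ℂ := by
  rw [Matrix.mem_unitaryGroup_iff]
  show Matrix.blockDiagonal d * (Matrix.blockDiagonal d)ᴴ = 1
  rw [Matrix.blockDiagonal_conjTranspose, ← Matrix.blockDiagonal_mul, ← Matrix.blockDiagonal_one]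
  have : (fun k => d k * (d k)ᴴ) = fun _ : o => (1 : Matrix m m ℂ) := by
    funext k
    have := h k
    rw [Matrix.mem_unitaryGroup_iff] at this
    exact this
  rw [this]
  rfl

lemma T_unitary (c0 c1 : ℝ) (h : c0 ^ 2 + c1 ^ 2 = 1) :
    (!![(c0 : ℂ), -(c1 : ℂ); (c1 : ℂ), (c0 : ℂ)]) ∈ Matrix.unitaryGroup (Fin 2) ℂ := by
  rw [Matrix.mem_unitaryGroup_iff]
  show _ * _ᴴ = 1
  ext i j
  have hc : ((c0 : ℂ)) ^ 2 + (c1 : ℂ) ^ 2 = 1 := by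
    rw [show ((1:ℂ)) = ((1:ℝ):ℂ) by norm_num, ← h]; push_cast; ring
  fin_cases i <;> fin_cases j <;>
    simp [Matrix.mul_apply, Fin.sum_univ_two, Matrix.conjTranspose_apply, Matrix.one_apply,
      Complex.conj_ofReal] <;> ring_nf <;>
    linear_combination hc

/-- addition of block-encodings via LCU: from an
`(α₁, m₁, ε₁)`-block-encoding of `A₁` and an `(α₂, m₂, ε₂)`-block-encoding of `A₂`
there exists an `(α₁+α₂, m₁+m₂+1, ε₁+ε₂)`-block-encoding of `A₁+A₂`. -/
theorem stmt13 (n m₁ m₂ : ℕ) (α₁ α₂ ε₁ ε₂ : ℝ) (hα₁ : 0 ≤ α₁) (hα₂ : 0 ≤ α₂)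
    (A₁ A₂ : Matrix (Fin (2 ^ n)) (Fin (2 ^ n)) ℂ)
    (U₁ : Matrix (Fin (2 ^ m₁) × Fin (2 ^ n)) (Fin (2 ^ m₁) × Fin (2 ^ n)) ℂ)
    (U₂ : Matrix (Fin (2 ^ m₂) × Fin (2 ^ n)) (Fin (2 ^ m₂) × Fin (2 ^ n)) ℂ)
    (h₁ : IsBlockEncoding ⟨0, Nat.two_pow_pos m₁⟩ α₁ ε₁ U₁ A₁)
    (h₂ : IsBlockEncoding ⟨0, Nat.two_pow_pos m₂⟩ α₂ ε₂ U₂ A₂) :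
    ∃ W : Matrix ((Fin 2 × Fin (2 ^ m₁) × Fin (2 ^ m₂)) × Fin (2 ^ n))
        ((Fin 2 × Fin (2 ^ m₁) × Fin (2 ^ m₂)) × Fin (2 ^ n)) ℂ,
      IsBlockEncoding (0, ⟨0, Nat.two_pow_pos m₁⟩, ⟨0, Nat.two_pow_pos m₂⟩)
        (α₁ + α₂) (ε₁ + ε₂) W (A₁ + A₂) := by
  obtain ⟨hU₁, hn₁⟩ := h₁
  obtain ⟨hU₂, hn₂⟩ := h₂
  set z₁ : Fin (2 ^ m₁) := ⟨0, Nat.two_pow_pos m₁⟩ with hz₁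
  set z₂ : Fin (2 ^ m₂) := ⟨0, Nat.two_pow_pos m₂⟩ with hz₂
  set B₁ : Matrix (Fin (2 ^ n)) (Fin (2 ^ n)) ℂ :=
    Matrix.of (fun i j => U₁ (z₁, i) (z₁, j)) with hB₁
  set B₂ : Matrix (Fin (2 ^ n)) (Fin (2 ^ n)) ℂ :=
    Matrix.of (fun i j => U₂ (z₂, i) (z₂, j)) with hB₂
  rcases eq_or_lt_of_le (by positivity : (0:ℝ) ≤ α₁ + α₂) with hs | hs
  · -- degenerate case: α₁ + α₂ = 0, so α₁ = α₂ = 0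
    have h10 : α₁ = 0 := by linarith
    have h20 : α₂ = 0 := by linarith
    refine ⟨1, Submonoid.one_mem _, ?_⟩
    rw [h10] at hn₁
    rw [h20] at hn₂
    rw [← hs]
    simp only [zero_smul, sub_zero] at hn₁ hn₂ ⊢
    exact le_trans (specNorm_add_le A₁ A₂) (add_le_add hn₁ hn₂)
  · -- main case
    have hs0 : α₁ + α₂ ≠ 0 := ne_of_gt hs
    set c0 : ℝ := Real.sqrt (α₁ / (α₁ + α₂)) with hc0
    set c1 : ℝ := Real.sqrt (α₂ / (α₁ + α₂)) with hc1
    have hc0sq : c0 ^ 2 = α₁ / (α₁ + α₂) := Real.sq_sqrt (by positivity)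
    have hc1sq : c1 ^ 2 = α₂ / (α₁ + α₂) := Real.sq_sqrt (by positivity)
    have hcsum : c0 ^ 2 + c1 ^ 2 = 1 := by
      rw [hc0sq, hc1sq]; field_simp
    set T : Matrix (Fin 2) (Fin 2) ℂ := !![(c0 : ℂ), -(c1 : ℂ); (c1 : ℂ), (c0 : ℂ)] with hT
    have hTu : T ∈ Matrix.unitaryGroup (Fin 2) ℂ := T_unitary c0 c1 hcsum
    set e₁ : (Fin (2 ^ m₁) × Fin (2 ^ n)) × Fin (2 ^ m₂) ≃
        (Fin (2 ^ m₁) × Fin (2 ^ m₂)) × Fin (2 ^ n) :=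
      ⟨fun x => ((x.1.1, x.2), x.1.2), fun y => ((y.1.1, y.2), y.1.2),
        fun _ => rfl, fun _ => rfl⟩ with he₁
    set e₂ : (Fin (2 ^ m₂) × Fin (2 ^ n)) × Fin (2 ^ m₁) ≃
        (Fin (2 ^ m₁) × Fin (2 ^ m₂)) × Fin (2 ^ n) :=
      ⟨fun x => ((x.2, x.1.1), x.1.2), fun y => ((y.1.2, y.2), y.1.1),
        fun _ => rfl, fun _ => rfl⟩ with he₂
    set e : ((Fin (2 ^ m₁) × Fin (2 ^ m₂)) × Fin (2 ^ n)) × Fin 2 ≃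
        (Fin 2 × Fin (2 ^ m₁) × Fin (2 ^ m₂)) × Fin (2 ^ n) :=
      ⟨fun x => ((x.2, x.1.1), x.1.2), fun y => ((y.1.2, y.2), y.1.1),
        fun _ => rfl, fun _ => rfl⟩ with he
    set V₁ := Matrix.reindex e₁ e₁ (U₁ ⊗ₖ (1 : Matrix (Fin (2 ^ m₂)) (Fin (2 ^ m₂)) ℂ)) with hV₁
    set V₂ := Matrix.reindex e₂ e₂ (U₂ ⊗ₖ (1 : Matrix (Fin (2 ^ m₁)) (Fin (2 ^ m₁)) ℂ)) with hV₂
    set d := ![V₁, V₂] with hd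
    set V := Matrix.reindex e e (Matrix.blockDiagonal d) with hV
    set Q := (T ⊗ₖ (1 : Matrix (Fin (2 ^ m₁) × Fin (2 ^ m₂)) (Fin (2 ^ m₁) × Fin (2 ^ m₂)) ℂ))
      ⊗ₖ (1 : Matrix (Fin (2 ^ n)) (Fin (2 ^ n)) ℂ) with hQ
    set P := (Tᴴ ⊗ₖ (1 : Matrix (Fin (2 ^ m₁) × Fin (2 ^ m₂)) (Fin (2 ^ m₁) × Fin (2 ^ m₂)) ℂ))
      ⊗ₖ (1 : Matrix (Fin (2 ^ n)) (Fin (2 ^ n)) ℂ) with hP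
    set W := P * V * Q with hW
    have hVu : V ∈ Matrix.unitaryGroup _ ℂ := by
      refine reindex_unitary e (blockDiagonal_unitary ?_)
      intro k
      fin_cases k
      · exact reindex_unitary e₁ (kron_unitary hU₁ (Submonoid.one_mem _))
      · exact reindex_unitary e₂ (kron_unitary hU₂ (Submonoid.one_mem _))
    have hTcu : Tᴴ ∈ Matrix.unitaryGroup (Fin 2) ℂ := Unitary.star_mem hTu
    have hWu : W ∈ Matrix.unitaryGroup _ ℂ :=
      Submonoid.mul_mem _
        (Submonoid.mul_mem _
          (kron_unitary (kron_unitary hTcu (Submonoid.one_mem _)) (Submonoid.one_mem _)) hVu)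
        (kron_unitary (kron_unitary hTu (Submonoid.one_mem _)) (Submonoid.one_mem _))
    refine ⟨W, hWu, ?_⟩
    have hWentry : ∀ i j : Fin (2 ^ n), W ((0, z₁, z₂), i) ((0, z₁, z₂), j)
        = (c0 : ℂ) ^ 2 * U₁ (z₁, i) (z₁, j) + (c1 : ℂ) ^ 2 * U₂ (z₂, i) (z₂, j) := by
      intro i j
      simp only [hW, Matrix.mul_apply, hP, hQ, hV, hd, Matrix.kroneckerMap_apply,
        Matrix.reindex_apply, Matrix.submatrix_apply, Matrix.blockDiagonal_apply,
        Matrix.one_apply, Matrix.conjTranspose_apply, Fintype.sum_prod_type,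
        Equiv.coe_fn_symm_mk, Equiv.coe_fn_mk, mul_ite, ite_mul, mul_zero, zero_mul,
        mul_one, one_mul, Finset.sum_ite_eq, Finset.sum_ite_eq', Finset.mem_univ, if_true,
        Fin.sum_univ_two, he, he₁, he₂, hV₁, hV₂, hT, Equiv.coe_fn_mk,
        Prod.mk.injEq, Matrix.cons_val_zero, Matrix.cons_val_one, Matrix.head_cons,
        Matrix.cons_val', Matrix.empty_val', Matrix.cons_val_fin_one, Matrix.head_fin_const,
        Complex.star_def, Complex.conj_ofReal, map_neg, and_true, true_and, if_true, if_false,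
        one_ne_zero, zero_ne_one, Fin.one_eq_zero_iff, Fin.zero_eq_one_iff, Nat.succ_ne_self]
      simp [ite_and, Finset.sum_ite_eq, Finset.sum_ite_eq', Finset.mem_univ, if_true,
        Finset.sum_const_zero, add_zero, zero_add, Matrix.cons_val', Matrix.cons_val_zero,
        Matrix.cons_val_one, Matrix.head_cons, Matrix.head_fin_const, Matrix.empty_val',
        Matrix.cons_val_fin_one, Complex.conj_ofReal, map_neg, if_pos rfl]
      ring
    have hblock : (α₁ + α₂) •
          (Matrix.of fun i j : Fin (2 ^ n) => W ((0, z₁, z₂), i) ((0, z₁, z₂), j))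
        = α₁ • B₁ + α₂ • B₂ := by
      ext i j
      simp only [Matrix.smul_apply, Matrix.add_apply, Matrix.of_apply, hWentry i j, hB₁, hB₂]
      rw [Complex.real_smul, Complex.real_smul, Complex.real_smul]
      have h0 : ((c0:ℂ))^2 = ((α₁/(α₁+α₂) : ℝ) : ℂ) := by rw [← hc0sq]; push_cast; ring
      have h1 : ((c1:ℂ))^2 = ((α₂/(α₁+α₂) : ℝ) : ℂ) := by rw [← hc1sq]; push_cast; ring
      rw [h0, h1]
      have hcs : ((α₁:ℂ) + α₂) ≠ 0 := by
        rw [show ((α₁:ℂ) + α₂) = ((α₁ + α₂ : ℝ) : ℂ) by push_cast; ring]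
        exact Complex.ofReal_ne_zero.mpr hs0
      push_cast
      field_simp
    have key : A₁ + A₂ - (α₁ + α₂) •
          (Matrix.of fun i j : Fin (2 ^ n) => W ((0, z₁, z₂), i) ((0, z₁, z₂), j))
        = (A₁ - α₁ • B₁) + (A₂ - α₂ • B₂) := by
      rw [hblock]; abel
    rw [key]
    exact le_trans (specNorm_add_le _ _) (add_le_add hn₁ hn₂)
end

section
/- Product of block-encodings: if U₁ is an (α₁, m₁, ε₁)-block-encoding of A₁ and U₂ is an (α₂, m₂, ε₂)-block-encoding of A₂ with ‖A₂‖ ≤ α₂, then (I_{m₂}⊗U₁)(I_{m₁}⊗U₂) (with ancilla registers appropriately tensored) is an (α₁α₂, m₁+m₂, α₁ε₂ + α₂ε₁)-block-encoding of A₁A₂; i.e., ‖A₁A₂ − α₁α₂ Π (I⊗U₁)(I⊗U₂) Π†‖ ≤ α₁ε₂ + α₂ε₁ where Π projects all ancillas to |0⟩. -/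
open scoped Matrix.Norms.L2Operator
open Matrix

lemma specNorm_eq_l2 {m n : Type*} [Fintype m] [Fintype n] [DecidableEq n]
    (B : Matrix m n ℂ) : specNorm B = ‖B‖ := rfl

lemma l2_norm_one_le (s : Type*) [Fintype s] [DecidableEq s] :
    ‖(1 : Matrix s s ℂ)‖ ≤ 1 := by
  have h : ‖(1:Matrix s s ℂ)‖ * ‖(1:Matrix s s ℂ)‖ = ‖(1:Matrix s s ℂ)‖ := by
    rw [← Matrix.l2_opNorm_conjTranspose_mul_self]; simp
  nlinarith [norm_nonneg (1 : Matrix s s ℂ)]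

lemma l2_norm_unitary {s : Type*} [Fintype s] [DecidableEq s]
    {U : Matrix s s ℂ} (hU : U ∈ Matrix.unitaryGroup s ℂ) : ‖U‖ ≤ 1 := by
  have h1 : Uᴴ * U = 1 := hU.1
  have h : ‖U‖ * ‖U‖ = ‖Uᴴ * U‖ := (Matrix.l2_opNorm_conjTranspose_mul_self U).symm
  rw [h1] at h
  nlinarith [norm_nonneg U, l2_norm_one_le s]

/-- The injection matrix `P : s → a × s` picking out ancilla value `z`. -/
def injMat {a s : Type*} [Fintype a] [DecidableEq a] [Fintype s] [DecidableEq s]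
    (z : a) : Matrix s (a × s) ℂ :=
  Matrix.of fun i p => if p = (z, i) then 1 else 0

lemma injMat_mul_conjTranspose {a s : Type*} [Fintype a] [DecidableEq a] [Fintype s]
    [DecidableEq s] (z : a) :
    injMat (a := a) (s := s) z * (injMat (a := a) (s := s) z)ᴴ = (1 : Matrix s s ℂ) := by
  ext i j
  simp only [Matrix.mul_apply, injMat, Matrix.conjTranspose_apply, Matrix.of_apply,
    apply_ite (star : ℂ → ℂ), star_one, star_zero, ite_mul, one_mul, zero_mul, Finset.sum_ite_eq',
    Finset.mem_univ, if_true, Matrix.one_apply, Prod.mk.injEq]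
  by_cases h : i = j <;> simp [h]

lemma l2_norm_injMat_le {a s : Type*} [Fintype a] [DecidableEq a] [Fintype s]
    [DecidableEq s] (z : a) : ‖injMat (a := a) (s := s) z‖ ≤ 1 := by
  have h : ‖(injMat (a := a) (s := s) z)ᴴ‖ * ‖(injMat (a := a) (s := s) z)ᴴ‖
      = ‖(1 : Matrix s s ℂ)‖ := by
    rw [← injMat_mul_conjTranspose (a := a) (s := s) z,
      ← Matrix.l2_opNorm_conjTranspose_mul_self ((injMat (a := a) (s := s) z)ᴴ)]
    simp
  rw [Matrix.l2_opNorm_conjTranspose] at h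
  nlinarith [norm_nonneg (injMat (a := a) (s := s) z), l2_norm_one_le s]

lemma block_eq_inj_mul {a s : Type*} [Fintype a] [DecidableEq a] [Fintype s] [DecidableEq s]
    (z : a) (M : Matrix (a × s) (a × s) ℂ) :
    (Matrix.of fun i j : s => M (z, i) (z, j)) = injMat (a := a) (s := s) z * M * (injMat (a := a) (s := s) z)ᴴ := by
  ext i j
  simp only [Matrix.mul_apply, injMat, Matrix.conjTranspose_apply, Matrix.of_apply]
  rw [Fintype.sum_prod_type]
  simp [ite_and, Finset.sum_ite_eq', apply_ite, Finset.mul_sum]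

/-- Norm of a corner block is at most the norm of the whole matrix. -/
lemma l2_norm_block_le {a s : Type*} [Fintype a] [DecidableEq a] [Fintype s] [DecidableEq s]
    (z : a) (M : Matrix (a × s) (a × s) ℂ) :
    ‖(Matrix.of fun i j : s => M (z, i) (z, j))‖ ≤ ‖M‖ := by
  rw [block_eq_inj_mul]
  calc ‖injMat (a := a) (s := s) z * M * (injMat (a := a) (s := s) z)ᴴ‖ ≤ ‖injMat (a := a) (s := s) z * M‖ * ‖(injMat (a := a) (s := s) z)ᴴ‖ :=
        Matrix.l2_opNorm_mul _ _
    _ ≤ ‖injMat (a := a) (s := s) z‖ * ‖M‖ * ‖(injMat (a := a) (s := s) z)ᴴ‖ := by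
        have := Matrix.l2_opNorm_mul (injMat (a := a) (s := s) z) M
        have h0 : (0:ℝ) ≤ ‖(injMat (a := a) (s := s) z)ᴴ‖ := norm_nonneg _
        nlinarith
    _ ≤ ‖M‖ := by
        rw [Matrix.l2_opNorm_conjTranspose]
        have h1 := l2_norm_injMat_le (a := a) (s := s) z
        have h0 : (0:ℝ) ≤ ‖M‖ := norm_nonneg _
        have h2 : (0:ℝ) ≤ ‖injMat (a := a) (s := s) z‖ := norm_nonneg _
        nlinarith [mul_le_mul h1 h1 h2 zero_le_one, mul_nonneg (mul_nonneg h2 h0) h2]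

/-- product of block-encodings: with `W₁ = I_{a₂} ⊗ U₁` and
`W₂ = I_{a₁} ⊗ U₂` (ancilla registers appropriately tensored), `W₁ * W₂` is an
`(α₁α₂, m₁+m₂, α₁ε₂ + α₂ε₁)`-block-encoding of `A₁ A₂`. -/
theorem stmt14 {a₁ a₂ s : Type*} [Fintype a₁] [DecidableEq a₁] [Fintype a₂] [DecidableEq a₂]
    [Fintype s] [DecidableEq s] (z₁ : a₁) (z₂ : a₂)
    (α₁ α₂ ε₁ ε₂ : ℝ) (hα₁ : 0 ≤ α₁) (hα₂ : 0 ≤ α₂)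
    (A₁ A₂ : Matrix s s ℂ) (hA₂ : specNorm A₂ ≤ α₂)
    (U₁ : Matrix (a₁ × s) (a₁ × s) ℂ) (U₂ : Matrix (a₂ × s) (a₂ × s) ℂ)
    (h₁ : IsBlockEncoding z₁ α₁ ε₁ U₁ A₁)
    (h₂ : IsBlockEncoding z₂ α₂ ε₂ U₂ A₂)
    (W₁ W₂ : Matrix ((a₁ × a₂) × s) ((a₁ × a₂) × s) ℂ)
    (hW₁ : ∀ (p p' : a₁) (q q' : a₂) (i j : s),
      W₁ ((p, q), i) ((p', q'), j) = if q = q' then U₁ (p, i) (p', j) else 0)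
    (hW₂ : ∀ (p p' : a₁) (q q' : a₂) (i j : s),
      W₂ ((p, q), i) ((p', q'), j) = if p = p' then U₂ (q, i) (q', j) else 0) :
    IsBlockEncoding (z₁, z₂) (α₁ * α₂) (α₁ * ε₂ + α₂ * ε₁) (W₁ * W₂) (A₁ * A₂) := by
  obtain ⟨hU₁, hB₁⟩ := h₁
  obtain ⟨hU₂, hB₂⟩ := h₂
  -- W₁ and W₂ are unitary
  have hWu₁ : W₁ ∈ Matrix.unitaryGroup ((a₁ × a₂) × s) ℂ := by
    rw [Matrix.mem_unitaryGroup_iff']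
    · ext ⟨⟨p, q⟩, i⟩ ⟨⟨p', q'⟩, j⟩
      simp only [Matrix.mul_apply, Matrix.star_apply, Matrix.one_apply]
      have key := congrFun (congrFun hU₁.1 (p, i)) (p', j)
      simp only [Matrix.mul_apply, Matrix.star_apply, Matrix.one_apply,
        Matrix.conjTranspose_apply] at key ⊢
      rw [Fintype.sum_prod_type]
      rw [Fintype.sum_prod_type]
      simp only [hW₁]
      by_cases hq : q = q'
      · subst hq
        simp only [Prod.mk.injEq, Prod.ext_iff, and_assoc]
        calc (∑ r : a₁, ∑ t : a₂, ∑ k : s,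
              star (if t = q then U₁ (r, k) (p, i) else 0) *
                (if t = q then U₁ (r, k) (p', j) else 0))
            = ∑ r : a₁, ∑ k : s, star (U₁ (r, k) (p, i)) * U₁ (r, k) (p', j) := by
              congr 1; ext r
              rw [Finset.sum_comm]
              congr 1; ext k
              simp [apply_ite]
          _ = if (p, i) = (p', j) then 1 else 0 := by
              rw [← key, Fintype.sum_prod_type]
          _ = _ := by
              refine if_congr ?_ rfl rfl
              constructor <;> (intro h; simp_all [Prod.ext_iff])
      · trans (0:ℂ)
        swap
        · symm; simp [Prod.ext_iff, hq]
        apply Finset.sum_eq_zero; intro r _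
        apply Finset.sum_eq_zero; intro t _
        apply Finset.sum_eq_zero; intro k _
        by_cases h1 : t = q <;> by_cases h2 : t = q' <;>
          simp_all
  have hWu₂ : W₂ ∈ Matrix.unitaryGroup ((a₁ × a₂) × s) ℂ := by
    rw [Matrix.mem_unitaryGroup_iff']
    · ext ⟨⟨p, q⟩, i⟩ ⟨⟨p', q'⟩, j⟩
      simp only [Matrix.mul_apply, Matrix.star_apply, Matrix.one_apply]
      have key := congrFun (congrFun hU₂.1 (q, i)) (q', j)
      simp only [Matrix.mul_apply, Matrix.star_apply, Matrix.one_apply,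
        Matrix.conjTranspose_apply] at key ⊢
      rw [Fintype.sum_prod_type]
      rw [Fintype.sum_prod_type]
      simp only [hW₂]
      by_cases hp : p = p'
      · subst hp
        calc (∑ r : a₁, ∑ t : a₂, ∑ k : s,
              star (if r = p then U₂ (t, k) (q, i) else 0) *
                (if r = p then U₂ (t, k) (q', j) else 0))
            = ∑ t : a₂, ∑ k : s, star (U₂ (t, k) (q, i)) * U₂ (t, k) (q', j) := by
              rw [Finset.sum_comm]
              congr 1; ext t
              rw [Finset.sum_comm]
              congr 1; ext k
              simp [apply_ite]
          _ = if (q, i) = (q', j) then 1 else 0 := by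
              rw [← key, Fintype.sum_prod_type]
          _ = _ := by
              refine if_congr ?_ rfl rfl
              constructor <;> (intro h; simp_all [Prod.ext_iff])
      · trans (0:ℂ)
        swap
        · symm; simp [Prod.ext_iff, hp]
        apply Finset.sum_eq_zero; intro r _
        apply Finset.sum_eq_zero; intro t _
        apply Finset.sum_eq_zero; intro k _
        by_cases h1 : r = p <;> by_cases h2 : r = p' <;>
          simp_all
  refine ⟨mul_mem hWu₁ hWu₂, ?_⟩
  -- the corner block of W₁ * W₂ is the product of the corner blocks
  set B₁ : Matrix s s ℂ := Matrix.of fun i j : s => U₁ (z₁, i) (z₁, j) with hB₁def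
  set B₂ : Matrix s s ℂ := Matrix.of fun i j : s => U₂ (z₂, i) (z₂, j) with hB₂def
  have hblock : (Matrix.of fun i j : s => (W₁ * W₂) ((z₁, z₂), i) ((z₁, z₂), j)) = B₁ * B₂ := by
    ext i j
    simp only [Matrix.of_apply, Matrix.mul_apply, hB₁def, hB₂def]
    rw [Fintype.sum_prod_type, Fintype.sum_prod_type]
    simp only [hW₁, hW₂]
    rw [Finset.sum_eq_single z₁]
    · rw [Finset.sum_eq_single z₂]
      · simp
      · intro t _ ht
        apply Finset.sum_eq_zero; intro k _
        simp [Ne.symm ht]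
      · simp
    · intro r _ hr
      apply Finset.sum_eq_zero; intro t _
      apply Finset.sum_eq_zero; intro k _
      simp [hr]
    · simp
  rw [specNorm_eq_l2] at hB₁ hB₂ hA₂ ⊢
  rw [hblock]
  have hnB₁ : ‖B₁‖ ≤ 1 := by
    rw [hB₁def]
    exact le_trans (l2_norm_block_le z₁ U₁) (l2_norm_unitary hU₁)
  have hsplit : A₁ * A₂ - (α₁ * α₂) • (B₁ * B₂)
      = (A₁ - α₁ • B₁) * A₂ + α₁ • (B₁ * (A₂ - α₂ • B₂)) := by
    simp only [Matrix.sub_mul, Matrix.mul_sub, smul_sub, Matrix.smul_mul, Matrix.mul_smul,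
      smul_smul]
    abel
  rw [hsplit]
  calc ‖(A₁ - α₁ • B₁) * A₂ + α₁ • (B₁ * (A₂ - α₂ • B₂))‖
      ≤ ‖(A₁ - α₁ • B₁) * A₂‖ + ‖α₁ • (B₁ * (A₂ - α₂ • B₂))‖ := norm_add_le _ _
    _ ≤ ‖A₁ - α₁ • B₁‖ * ‖A₂‖ + α₁ * (‖B₁‖ * ‖A₂ - α₂ • B₂‖) := by
        gcongr
        · exact Matrix.l2_opNorm_mul _ _
        · rw [norm_smul, Real.norm_eq_abs, abs_of_nonneg hα₁]
          gcongr
          exact Matrix.l2_opNorm_mul _ _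
    _ ≤ ε₁ * α₂ + α₁ * (1 * ε₂) := by
        have n1 := norm_nonneg (A₁ - α₁ • B₁)
        have n2 := norm_nonneg A₂
        have n3 := norm_nonneg B₁
        have n4 := norm_nonneg (A₂ - α₂ • B₂)
        nlinarith [hB₁, hA₂, hB₂, hnB₁, mul_le_mul hB₁ hA₂ n2 (le_trans n1 hB₁),
          mul_le_mul hnB₁ hB₂ n4 zero_le_one]
    _ = α₁ * ε₂ + α₂ * ε₁ := by ring
end
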